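/- Let V be a real Hilbert space with inner product a, let P₁,…,P_N be orthogonal projections onto closed subspaces satisfying the stable decomposition assumption with constant C₀ and the strengthened Cauchy–Schwarz assumption with matrix ℰ. Let P = Σᵢ Pᵢ and τ > 0. Then for every e ∈ V, a((I − τP)e, (I − τP)e) ≤ (1 − 2τ/(2+C₀) + ‖ℰ‖₂² τ²) a(e,e). -/

import Mathlib

set_option maxHeartbeats 1000000

open RealInnerProductSpace

/-- Spectral norm (operator 2-norm) of a real matrix. -/
noncomputable def matSpectralNorm {N : ℕ} (E : Matrix (Fin N) (Fin N) ℝ) : ℝ :=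
  ‖(Matrix.toEuclideanCLM (𝕜 := ℝ) E : EuclideanSpace ℝ (Fin N) →L[ℝ] EuclideanSpace ℝ (Fin N))‖

lemma quadForm_le {N : ℕ} (E : Matrix (Fin N) (Fin N) ℝ) (u : Fin N → ℝ) :
    ∑ i, ∑ j, E i j * (u i * u j) ≤ matSpectralNorm E * ∑ i, u i * u i := by
  set A := (Matrix.toEuclideanCLM (𝕜 := ℝ) E) with hA
  set xv : EuclideanSpace ℝ (Fin N) := (WithLp.equiv 2 _).symm u with hxv
  have hAx : A xv = (WithLp.equiv 2 _).symm (Matrix.toLin' E u) :=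
    Matrix.toEuclideanCLM_toLp (𝕜 := ℝ) E u
  have hinner : ⟪xv, A xv⟫ = ∑ i, ∑ j, E i j * (u i * u j) := by
    rw [hAx]
    simp [PiLp.inner_apply, RCLike.inner_apply, conj_trivial, Matrix.toLin'_apply,
      Matrix.mulVec, dotProduct, Finset.mul_sum, hxv]
    ring_nf
    congr 1; ext i; rw [Finset.sum_mul]; congr 1; ext j; ring
  have hxx : ⟪xv, xv⟫ = ∑ i, u i * u i := by
    rw [hxv, real_inner_self_eq_norm_sq, EuclideanSpace.real_norm_sq_eq]; simp [sq]
  have h1 : ⟪xv, A xv⟫ ≤ ‖xv‖ * ‖A xv‖ := real_inner_le_norm _ _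
  have h2 : ‖A xv‖ ≤ ‖A‖ * ‖xv‖ := A.le_opNorm xv
  have h3 : ‖xv‖ ^ 2 = ⟪xv, xv⟫ := (real_inner_self_eq_norm_sq xv).symm
  have hn : (0:ℝ) ≤ ‖xv‖ := norm_nonneg _
  have hnA : (0:ℝ) ≤ ‖A‖ := norm_nonneg _
  have : matSpectralNorm E = ‖A‖ := rfl
  rw [← hinner, ← hxx, this, ← h3]
  nlinarith

/-- One-level additive Schwarz error reduction (Theorem 3.3):
`a((I−τP)e,(I−τP)e) ≤ (1 − 2τ/(2+C₀) + ‖ℰ‖₂² τ²) a(e,e)`. -/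
theorem asm_error_reduction {V : Type*} [NormedAddCommGroup V] [InnerProductSpace ℝ V]
    {N : ℕ} (Vs : Fin N → Submodule ℝ V) (hclosed : ∀ i, IsClosed (Vs i : Set V))
    (P : Fin N → V →ₗ[ℝ] V)
    (hPmem : ∀ i (v : V), P i v ∈ Vs i)
    (hPproj : ∀ i (v : V), ∀ w ∈ Vs i, ⟪P i v, w⟫ = ⟪v, w⟫)
    (C₀ : ℝ) (hC₀ : 0 < C₀)
    (hdecomp : ∀ v : V, ∃ vi : Fin N → V, (∀ i, vi i ∈ Vs i) ∧ v = ∑ i, vi i ∧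
      ∑ i, ⟪vi i, vi i⟫ ≤ C₀ * ⟪v, v⟫)
    (E : Matrix (Fin N) (Fin N) ℝ)
    (hE0 : ∀ i j, 0 ≤ E i j) (hE1 : ∀ i j, E i j ≤ 1)
    (hCS : ∀ i j, ∀ vi ∈ Vs i, ∀ vj ∈ Vs j,
      ⟪vi, vj⟫ ≤ E i j * Real.sqrt ⟪vi, vi⟫ * Real.sqrt ⟪vj, vj⟫)
    (τ : ℝ) (hτ : 0 < τ) :
    ∀ e : V, ⟪e - τ • ∑ i, P i e, e - τ • ∑ i, P i e⟫
      ≤ (1 - 2 * τ / (2 + C₀) + (matSpectralNorm E) ^ 2 * τ ^ 2) * ⟪e, e⟫ := by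
  intro e
  set s : ℝ := matSpectralNorm E with hs_def
  have hs : 0 ≤ s := norm_nonneg _
  set q : Fin N → V := fun i => P i e with hq
  set Pe : V := ∑ i, q i with hPe
  set S : ℝ := ∑ i, ⟪q i, q i⟫ with hS
  set x : ℝ := ⟪e, e⟫ with hx
  set Q : ℝ := ⟪Pe, Pe⟫ with hQdef
  have hSnn : 0 ≤ S := Finset.sum_nonneg fun i _ => real_inner_self_nonneg
  have hxnn : 0 ≤ x := real_inner_self_nonneg
  have hQnn : 0 ≤ Q := real_inner_self_nonneg
  have hsqrt : ∀ i, Real.sqrt ⟪q i, q i⟫ = ‖q i‖ := by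
    intro i
    rw [real_inner_self_eq_norm_sq, Real.sqrt_sq (norm_nonneg _)]
  have hS2 : S = ∑ i, ‖q i‖ * ‖q i‖ := by
    simp [hS, real_inner_self_eq_norm_mul_norm, sq]
  have hqsq : ∑ i, ‖q i‖ ^ 2 = S := by
    rw [hS2]; exact Finset.sum_congr rfl fun i _ => pow_two _
  -- (a) ⟪e, Pe⟫ = S
  have ha : ⟪e, Pe⟫ = S := by
    rw [hPe, inner_sum]
    exact Finset.sum_congr rfl fun i _ => (hPproj i e (q i) (hPmem i e)).symm
  -- (c) x ≤ C₀ * S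
  have hc : x ≤ C₀ * S := by
    obtain ⟨vi, hvimem, hvisum, hvib⟩ := hdecomp e
    have hx_le : x ≤ ∑ i, ‖q i‖ * ‖vi i‖ := by
      have hxeq : x = ∑ i, ⟪q i, vi i⟫ := by
        calc x = ⟪e, ∑ i, vi i⟫ := by rw [← hvisum]
          _ = ∑ i, ⟪e, vi i⟫ := inner_sum _ _ _
          _ = ∑ i, ⟪q i, vi i⟫ :=
            Finset.sum_congr rfl fun i _ => (hPproj i e (vi i) (hvimem i)).symm
      rw [hxeq]
      exact Finset.sum_le_sum fun i _ => real_inner_le_norm _ _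
    have cauchy : (∑ i, ‖q i‖ * ‖vi i‖) ^ 2 ≤ (∑ i, ‖q i‖ ^ 2) * (∑ i, ‖vi i‖ ^ 2) :=
      Finset.sum_mul_sq_le_sq_mul_sq Finset.univ _ _
    have hvb : ∑ i, ‖vi i‖ ^ 2 ≤ C₀ * x := by
      have h' : ∑ i, ⟪vi i, vi i⟫ = ∑ i, ‖vi i‖ ^ 2 :=
        Finset.sum_congr rfl fun i _ => real_inner_self_eq_norm_sq _
      rw [← h']; exact hvib
    have hT1 : x ^ 2 ≤ (∑ i, ‖q i‖ * ‖vi i‖) ^ 2 := by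
      have := mul_self_le_mul_self hxnn hx_le
      calc x ^ 2 = x * x := pow_two x
        _ ≤ (∑ i, ‖q i‖ * ‖vi i‖) * (∑ i, ‖q i‖ * ‖vi i‖) := this
        _ = (∑ i, ‖q i‖ * ‖vi i‖) ^ 2 := (pow_two _).symm
    have hT2 : (∑ i, ‖q i‖ ^ 2) * (∑ i, ‖vi i‖ ^ 2) ≤ S * (C₀ * x) := by
      rw [hqsq]; exact mul_le_mul_of_nonneg_left hvb hSnn
    have hxx : x ^ 2 ≤ C₀ * S * x := by nlinarith [hT1, cauchy, hT2]
    rcases hxnn.eq_or_lt with h0 | h0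
    · rw [← h0]; positivity
    · nlinarith [hxx, h0]
  -- (d) Q ≤ s * S
  have hd : Q ≤ s * S := by
    have h1 : Q = ∑ i, ∑ j, ⟪q i, q j⟫ := by
      rw [hQdef, hPe, sum_inner]
      exact Finset.sum_congr rfl fun i _ => inner_sum _ _ _
    have h2 : ∑ i, ∑ j, ⟪q i, q j⟫ ≤ ∑ i, ∑ j, E i j * (‖q i‖ * ‖q j‖) := by
      refine Finset.sum_le_sum fun i _ => Finset.sum_le_sum fun j _ => ?_
      have h := hCS i j (q i) (hPmem i e) (q j) (hPmem j e)
      rw [hsqrt i, hsqrt j] at h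
      linarith [h]
    have h3 := quadForm_le E (fun i => ‖q i‖)
    rw [h1]
    calc ∑ i, ∑ j, ⟪q i, q j⟫ ≤ ∑ i, ∑ j, E i j * (‖q i‖ * ‖q j‖) := h2
      _ ≤ s * ∑ i, ‖q i‖ * ‖q i‖ := h3
      _ = s * S := by rw [← hS2]
  -- (e) S ≤ s * x
  have he : S ≤ s * x := by
    have h1 : S ≤ ‖e‖ * ‖Pe‖ := ha ▸ real_inner_le_norm e Pe
    have h2 : ‖e‖ ^ 2 = x := (real_inner_self_eq_norm_sq e).symm
    have h3 : ‖Pe‖ ^ 2 = Q := (real_inner_self_eq_norm_sq Pe).symm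
    have hSS : S * S ≤ x * Q := by
      nlinarith [mul_self_le_mul_self hSnn h1, h2, h3, norm_nonneg e, norm_nonneg Pe]
    have hxQ : x * Q ≤ x * (s * S) := mul_le_mul_of_nonneg_left hd hxnn
    rcases hSnn.eq_or_lt with h0 | h0
    · rw [← h0]; positivity
    · nlinarith [hSS, hxQ, h0]
  -- expansion
  have hexp : ⟪e - τ • Pe, e - τ • Pe⟫ = x - 2 * (τ * S) + τ * (τ * Q) := by
    rw [real_inner_sub_sub_self, real_inner_smul_right, ha, real_inner_smul_left,
      real_inner_smul_right]
  rw [hexp]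
  clear_value s q Pe S x Q
  have h2C : (0:ℝ) < 2 + C₀ := by linarith
  have h1 : 2 * τ / (2 + C₀) * x ≤ 2 * τ * S := by
    rw [div_mul_eq_mul_div, div_le_iff₀ h2C]
    nlinarith [hc, hSnn, hτ]
  have hQ2 : Q ≤ s ^ 2 * x := by nlinarith [hd, he, mul_le_mul_of_nonneg_left he hs]
  have hτQ : τ * (τ * Q) ≤ s ^ 2 * τ ^ 2 * x := by
    nlinarith [mul_le_mul_of_nonneg_left hQ2 (sq_nonneg τ)]
  have hrhs : (1 - 2 * τ / (2 + C₀) + s ^ 2 * τ ^ 2) * x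
      = x - 2 * τ / (2 + C₀) * x + s ^ 2 * τ ^ 2 * x := by ring
  rw [hrhs]
  linarith [h1, hτQ]
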